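/- arXiv:2304.09372 — 3 statements merged into one kernel-verified Lean document; each statement's English description precedes it below -/
import Mathlib

section
/- Let B = Φ(Λ−εI)Φᵀ + εI where Φ is m×κ with orthonormal columns, Λ = diag(λ₁,…,λ_κ), and 0 < ε < λ_k for all k. For any nonempty J ⊆ {1,…,m} and any k, define u = Φ_kᵀ (B − B_{J,·}ᵀ B_{JJ}⁻¹ B_{J,·}) Φ_k and w = u/λ_k. Then 0 ≤ w ≤ 1. -/
open Matrix

lemma psd_diag_nonneg {n : Type*} [Fintype n] [DecidableEq n]
    {A : Matrix n n ℝ} (hA : A.PosSemidef) (i : n) : 0 ≤ A i i := by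
  have := hA.dotProduct_mulVec_nonneg (Pi.single i 1)
  simpa [dotProduct, mulVec, Pi.single_apply, Finset.sum_ite_eq, Finset.sum_ite_eq'] using this

theorem stmt_4 (m κ : ℕ) (Φ : Matrix (Fin m) (Fin κ) ℝ)
    (hΦ : Φᵀ * Φ = 1) (ε : ℝ) (hε : 0 < ε) (lam : Fin κ → ℝ)
    (hlam : ∀ k, ε < lam k)
    (B : Matrix (Fin m) (Fin m) ℝ)
    (hB : B = Φ * Matrix.diagonal (fun k => lam k - ε) * Φᵀ + ε • (1 : Matrix (Fin m) (Fin m) ℝ))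
    (J : Finset (Fin m)) (hJ : J.Nonempty)
    (BJ : Matrix {i // i ∈ J} (Fin m) ℝ)
    (hBJ : BJ = B.submatrix (Subtype.val : {i // i ∈ J} → Fin m) id)
    (BJJ : Matrix {i // i ∈ J} {i // i ∈ J} ℝ)
    (hBJJ : BJJ = B.submatrix (Subtype.val : {i // i ∈ J} → Fin m)
      (Subtype.val : {i // i ∈ J} → Fin m))
    (k : Fin κ) (u w : ℝ)
    (hu : u = (Φᵀ * (B - BJᵀ * BJJ⁻¹ * BJ) * Φ) k k)
    (hw : w = u / lam k) :
    0 ≤ w ∧ w ≤ 1 := by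
  have hlamk : 0 < lam k := lt_trans hε (hlam k)
  -- B is positive definite
  have hBpd : B.PosDef := by
    rw [hB]
    have h1 : (Φ * Matrix.diagonal (fun k => lam k - ε) * Φᵀ).PosSemidef := by
      have hd : (Matrix.diagonal (fun k => lam k - ε)).PosSemidef :=
        Matrix.PosSemidef.diagonal (fun k => by have := hlam k; simp; linarith)
      simpa [Matrix.conjTranspose_eq_transpose_of_trivial] using
        hd.mul_mul_conjTranspose_same Φ
    have h2 : (ε • (1 : Matrix (Fin m) (Fin m) ℝ)).PosDef := by
      rw [Matrix.smul_one_eq_diagonal]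
      exact Matrix.posDef_diagonal_iff.mpr fun _ => hε
    exact Matrix.PosDef.posSemidef_add h1 h2
  have hBsym : Bᵀ = B := by
    have := hBpd.isHermitian
    rwa [Matrix.IsHermitian, Matrix.conjTranspose_eq_transpose_of_trivial] at this
  -- the selection matrix E
  set E : Matrix {i // i ∈ J} (Fin m) ℝ :=
    Matrix.of (fun i j => if (i : Fin m) = j then (1:ℝ) else 0) with hEdef
  have hEB : E * B = BJ := by
    rw [hBJ]; ext i j
    simp [hEdef, Matrix.mul_apply, Matrix.submatrix_apply, ite_mul, Finset.sum_ite_eq]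
  have hBEt : B * Eᵀ = BJᵀ := by
    rw [← hEB, Matrix.transpose_mul, hBsym]
  have hEBEt : E * B * Eᵀ = BJJ := by
    rw [hBJJ, hEB, hBJ]; ext i j
    simp [hEdef, Matrix.mul_apply, Matrix.submatrix_apply, mul_ite, Finset.sum_ite_eq']
  have hEt : Eᴴ = Eᵀ := Matrix.conjTranspose_eq_transpose_of_trivial E
  -- Eᵀ *ᵥ x ≠ 0 when x ≠ 0
  have hEtx : ∀ x : {i // i ∈ J} → ℝ, x ≠ 0 → Eᵀ *ᵥ x ≠ 0 := by
    intro x hx h0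
    apply hx
    funext i
    have := congrFun h0 (i : Fin m)
    simpa [hEdef, Matrix.mulVec, dotProduct, Matrix.transpose_apply, ite_mul,
      Subtype.val_injective.eq_iff, Finset.sum_ite_eq'] using this
  -- BJJ is positive definite
  have hBJJpd : BJJ.PosDef := by
    rw [← hEBEt]
    refine Matrix.PosDef.of_dotProduct_mulVec_pos ?_ ?_
    · rw [Matrix.IsHermitian, Matrix.conjTranspose_eq_transpose_of_trivial]
      simp [Matrix.transpose_mul, hBsym, Matrix.mul_assoc]
    · intro x hx
      have h := hBpd.dotProduct_mulVec_pos (hEtx x hx)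
      have heq : x ⬝ᵥ (E * B * Eᵀ) *ᵥ x = (Eᵀ *ᵥ x) ⬝ᵥ B *ᵥ (Eᵀ *ᵥ x) := by
        rw [Matrix.mulVec_mulVec, Matrix.dotProduct_mulVec, Matrix.dotProduct_mulVec,
          Matrix.mulVec_transpose, Matrix.vecMul_vecMul, Matrix.mul_assoc]
      simp only [star_trivial] at h ⊢
      rw [heq]; exact h
  have hBJJsym : BJJᵀ = BJJ := by
    have := hBJJpd.isHermitian
    rwa [Matrix.IsHermitian, Matrix.conjTranspose_eq_transpose_of_trivial] at this
  have hBJJinv_sym : (BJJ⁻¹)ᵀ = BJJ⁻¹ := by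
    rw [Matrix.transpose_nonsing_inv, hBJJsym]
  have hdet : IsUnit BJJ.det := (Matrix.isUnit_iff_isUnit_det BJJ).mp hBJJpd.isUnit
  have hinv1 : BJJ⁻¹ * BJJ = 1 := Matrix.nonsing_inv_mul BJJ hdet
  have hinv2 : BJJ * BJJ⁻¹ = 1 := Matrix.mul_nonsing_inv BJJ hdet
  -- the Schur-complement matrix
  set M : Matrix (Fin m) (Fin m) ℝ := B - BJᵀ * BJJ⁻¹ * BJ with hM
  set C : Matrix (Fin m) (Fin m) ℝ := 1 - Eᵀ * BJJ⁻¹ * BJ with hC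
  have hCt : Cᵀ = 1 - BJᵀ * BJJ⁻¹ * E := by
    rw [hC]
    simp [Matrix.transpose_sub, Matrix.transpose_mul, hBJJinv_sym, Matrix.mul_assoc]
  have hkey : Cᵀ * B * C = M := by
    rw [hCt, hC, hM]
    have e1 : BJᵀ * BJJ⁻¹ * E * B = BJᵀ * BJJ⁻¹ * BJ := by
      rw [Matrix.mul_assoc, hEB]
    have e2 : B * (Eᵀ * BJJ⁻¹ * BJ) = BJᵀ * BJJ⁻¹ * BJ := by
      rw [← Matrix.mul_assoc, ← Matrix.mul_assoc, hBEt]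
    have e3 : BJᵀ * BJJ⁻¹ * E * B * (Eᵀ * BJJ⁻¹ * BJ) = BJᵀ * BJJ⁻¹ * BJ := by
      have h4 : E * (B * (Eᵀ * (BJJ⁻¹ * BJ))) = BJJ * (BJJ⁻¹ * BJ) := by
        rw [← Matrix.mul_assoc, ← Matrix.mul_assoc, hEBEt]
      simp only [Matrix.mul_assoc]
      rw [h4, ← Matrix.mul_assoc BJJ⁻¹ BJJ, hinv1, Matrix.one_mul]
    simp only [Matrix.sub_mul, Matrix.mul_sub, Matrix.one_mul, Matrix.mul_one]
    rw [e3, e1, e2]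
    abel
  have hMpsd : M.PosSemidef := by
    rw [← hkey]
    have := hBpd.posSemidef.conjTranspose_mul_mul_same C
    rwa [Matrix.conjTranspose_eq_transpose_of_trivial] at this
  -- Φᵀ M Φ is PSD
  have hPsd1 : (Φᵀ * M * Φ).PosSemidef := by
    have := hMpsd.conjTranspose_mul_mul_same Φ
    rwa [Matrix.conjTranspose_eq_transpose_of_trivial] at this
  have hu0 : 0 ≤ u := by
    rw [hu]; exact psd_diag_nonneg hPsd1 k
  -- upper bound
  have hSchurPsd : (BJᵀ * BJJ⁻¹ * BJ).PosSemidef := by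
    have := hBJJpd.inv.posSemidef.conjTranspose_mul_mul_same BJ
    rwa [Matrix.conjTranspose_eq_transpose_of_trivial] at this
  have hPsd2 : (Φᵀ * (BJᵀ * BJJ⁻¹ * BJ) * Φ).PosSemidef := by
    have := hSchurPsd.conjTranspose_mul_mul_same Φ
    rwa [Matrix.conjTranspose_eq_transpose_of_trivial] at this
  have hBkk : (Φᵀ * B * Φ) k k = lam k := by
    rw [hB]
    have : Φᵀ * (Φ * Matrix.diagonal (fun k => lam k - ε) * Φᵀ + ε • 1) * Φ
        = Matrix.diagonal (fun k => lam k - ε) + ε • (1 : Matrix (Fin κ) (Fin κ) ℝ) := by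
      rw [Matrix.mul_add, Matrix.add_mul]
      rw [show Φᵀ * (Φ * Matrix.diagonal (fun k => lam k - ε) * Φᵀ) * Φ
          = (Φᵀ * Φ) * Matrix.diagonal (fun k => lam k - ε) * (Φᵀ * Φ) by
        simp [Matrix.mul_assoc]]
      rw [hΦ]
      simp [Matrix.mul_smul, Matrix.smul_mul, hΦ]
    rw [this]
    simp
  have hule : u ≤ lam k := by
    have hsplit : Φᵀ * B * Φ = Φᵀ * M * Φ + Φᵀ * (BJᵀ * BJJ⁻¹ * BJ) * Φ := by
      rw [hM]
      rw [Matrix.mul_sub, Matrix.sub_mul]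
      abel
    have : (Φᵀ * B * Φ) k k = u + (Φᵀ * (BJᵀ * BJJ⁻¹ * BJ) * Φ) k k := by
      rw [hsplit, hu]; simp [Matrix.add_apply]
    have h2 := psd_diag_nonneg hPsd2 k
    rw [hBkk] at this
    linarith
  constructor
  · rw [hw]; positivity
  · rw [hw, div_le_one hlamk]; exact hule
end

section
/- (Ignorance of missing rows, mean part) Let R be an n×n symmetric positive definite matrix, partition indices into Q = {1,…,t} and S = {t+1,…,n}, let D be diagonal with nonnegative entries supported on Q, and let r ∈ ℝⁿ, g ∈ ℝⁿ. Then as η → ∞, rᵀ (R + D + η S̃S̃ᵀ)⁻¹ g → r_Qᵀ ((R+D)_{QQ})⁻¹ g_Q, where S̃ = [0; I_{n−t}]. -/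
open Matrix Filter

theorem stmt_15 (t s : ℕ)
    (R : Matrix (Fin t ⊕ Fin s) (Fin t ⊕ Fin s) ℝ) (hR : R.PosDef)
    (d : Fin t → ℝ) (hd : ∀ i, 0 ≤ d i)
    (D : Matrix (Fin t ⊕ Fin s) (Fin t ⊕ Fin s) ℝ)
    (hD : D = Matrix.fromBlocks (Matrix.diagonal d) 0 0 0)
    (P : Matrix (Fin t ⊕ Fin s) (Fin t ⊕ Fin s) ℝ)
    (hP : P = Matrix.fromBlocks 0 0 0 (1 : Matrix (Fin s) (Fin s) ℝ))
    (r g : Fin t ⊕ Fin s → ℝ) :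
    Tendsto (fun η : ℝ => r ⬝ᵥ ((R + D + η • P)⁻¹ *ᵥ g)) atTop
      (nhds ((r ∘ Sum.inl) ⬝ᵥ
        (((R + D).submatrix Sum.inl Sum.inl)⁻¹ *ᵥ (g ∘ Sum.inl)))) := by
  classical
  -- `D` is positive semidefinite
  have hDpsd : D.PosSemidef := by
    rw [hD, (Matrix.diagonal_zero).symm, Matrix.fromBlocks_diagonal]
    refine Matrix.posSemidef_diagonal_iff.mpr ?_
    rintro (i | i)
    · simpa using hd i
    · simp
  have hA : (R + D).PosDef := hR.add_posSemidef hDpsd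
  set A := R + D with hAdef
  set B : Matrix (Fin t) (Fin t) ℝ := A.submatrix Sum.inl Sum.inl with hBdef
  -- `B` is positive definite
  have hB : B.PosDef := by
    rw [Matrix.posDef_iff_dotProduct_mulVec]
    constructor
    · have h := hA.isHermitian
      ext i j
      have := congrFun (congrFun h (Sum.inl i)) (Sum.inl j)
      simpa [Matrix.conjTranspose_apply, hBdef] using this
    · intro x hx
      have hy : (Sum.elim x 0 : Fin t ⊕ Fin s → ℝ) ≠ 0 := by
        intro h
        exact hx (funext fun i => congrFun h (Sum.inl i))
      have h2 := hA.dotProduct_mulVec_pos hy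
      have key : star (Sum.elim x (0 : Fin s → ℝ)) ⬝ᵥ (A *ᵥ Sum.elim x 0)
          = star x ⬝ᵥ (B *ᵥ x) := by
        simp [dotProduct, Matrix.mulVec, Fintype.sum_sum_type, hBdef]
      rwa [key] at h2
  have hdetB : IsUnit B.det := isUnit_iff_ne_zero.mpr hB.det_pos.ne'
  -- the scaling matrices
  set v : ℝ → (Fin t ⊕ Fin s → ℝ) :=
    fun ε => Sum.elim (fun _ => (1 : ℝ)) (fun _ => Real.sqrt ε) with hv
  set J : ℝ → Matrix (Fin t ⊕ Fin s) (Fin t ⊕ Fin s) ℝ :=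
    fun ε => Matrix.diagonal (v ε) with hJ
  set F : ℝ → Matrix (Fin t ⊕ Fin s) (Fin t ⊕ Fin s) ℝ := fun ε =>
    Matrix.fromBlocks B (Real.sqrt ε • A.toBlocks₁₂) (Real.sqrt ε • A.toBlocks₂₁)
      (ε • A.toBlocks₂₂ + 1) with hF
  set L : Matrix (Fin t ⊕ Fin s) (Fin t ⊕ Fin s) ℝ := Matrix.fromBlocks B⁻¹ 0 0 0 with hL
  have hF0 : F 0 = Matrix.fromBlocks B 0 0 1 := by
    simp [hF]
  have hdetF0 : (F 0).det ≠ 0 := by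
    rw [hF0, Matrix.det_fromBlocks_zero₂₁]
    simp [hB.det_pos.ne']
  have hF0inv : (F 0)⁻¹ = Matrix.fromBlocks B⁻¹ 0 0 1 := by
    apply Matrix.inv_eq_right_inv
    rw [hF0, Matrix.fromBlocks_multiply]
    simp [Matrix.mul_nonsing_inv _ hdetB, Matrix.fromBlocks_one]
  have hL' : J 0 * (F 0)⁻¹ * J 0 = L := by
    rw [hF0inv]
    ext (i | i) (j | j) <;>
      simp [hJ, hL, hv, Matrix.mul_diagonal, Matrix.diagonal_mul]
  -- continuity
  have hvc : Continuous v := by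
    apply continuous_pi
    rintro (i | i)
    · simpa [hv] using continuous_const
    · simpa [hv] using Real.continuous_sqrt
  have hJc : Continuous J := hvc.matrix_diagonal
  have hFc : Continuous F := by
    apply Continuous.matrix_fromBlocks
    · exact continuous_const
    · exact Real.continuous_sqrt.smul continuous_const
    · exact Real.continuous_sqrt.smul continuous_const
    · exact (continuous_id.smul continuous_const).add continuous_const
  have hinvc : ContinuousAt Inv.inv (F 0) := by
    apply continuousAt_matrix_inv
    rw [Ring.inverse_eq_inv']
    exact continuousAt_inv₀ hdetF0
  have hHc : ContinuousAt (fun ε => J ε * (F ε)⁻¹ * J ε) 0 :=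
    (hJc.continuousAt.mul (hinvc.comp hFc.continuousAt)).mul hJc.continuousAt
  have h2 : Tendsto (fun η : ℝ => J η⁻¹ * (F η⁻¹)⁻¹ * J η⁻¹) atTop (nhds L) := by
    rw [← hL']
    exact hHc.tendsto.comp tendsto_inv_atTop_zero
  -- eventual equality
  have heq : (fun η : ℝ => J η⁻¹ * (F η⁻¹)⁻¹ * J η⁻¹) =ᶠ[atTop]
      fun η : ℝ => (A + η • P)⁻¹ := by
    filter_upwards [eventually_gt_atTop (0 : ℝ)] with η hη
    set ε := η⁻¹ with hε
    have hε0 : 0 < ε := inv_pos.mpr hη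
    have hsq : Real.sqrt ε * Real.sqrt ε = ε := Real.mul_self_sqrt hε0.le
    have hεη : ε * η = 1 := inv_mul_cancel₀ hη.ne'
    have hM : F ε = J ε * (A + η • P) * J ε := by
      ext (i | i) (j | j) <;>
        simp [hF, hJ, hv, hP, hBdef, Matrix.mul_diagonal, Matrix.diagonal_mul,
          Matrix.toBlocks₁₂, Matrix.toBlocks₂₁, Matrix.toBlocks₂₂, Matrix.one_apply,
          mul_comm, mul_add, mul_assoc, hsq]
      · rcases eq_or_ne i j with h | h
        · simp [h]
          linear_combination (-(A (Sum.inr j) (Sum.inr j)) - η) * hsq - hεη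
        · simp [h]
          linear_combination (-(A (Sum.inr i) (Sum.inr j))) * hsq
    have hJu : IsUnit (J ε).det := by
      rw [hJ]
      simp only [Matrix.det_diagonal]
      apply isUnit_iff_ne_zero.mpr
      apply Finset.prod_ne_zero_iff.mpr
      rintro (i | i) _
      · simp [hv]
      · simp [hv]
        exact (Real.sqrt_pos.mpr hε0).ne'
    calc J ε * (F ε)⁻¹ * J ε
        = J ε * ((J ε * (A + η • P)) * J ε)⁻¹ * J ε := by rw [hM]
      _ = J ε * ((J ε)⁻¹ * ((A + η • P)⁻¹ * (J ε)⁻¹)) * J ε := by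
          rw [Matrix.mul_inv_rev, Matrix.mul_inv_rev]
      _ = (J ε * (J ε)⁻¹) * (A + η • P)⁻¹ * ((J ε)⁻¹ * J ε) := by
          simp only [mul_assoc]
      _ = (A + η • P)⁻¹ := by
          rw [Matrix.mul_nonsing_inv _ hJu, Matrix.nonsing_inv_mul _ hJu, one_mul, mul_one]
  have h3 : Tendsto (fun η : ℝ => (A + η • P)⁻¹) atTop (nhds L) := h2.congr' heq
  -- apply the continuous linear functional
  have hφ : Continuous (fun N : Matrix (Fin t ⊕ Fin s) (Fin t ⊕ Fin s) ℝ =>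
      r ⬝ᵥ (N *ᵥ g)) :=
    continuous_const.dotProduct (continuous_id.matrix_mulVec continuous_const)
  have h4 := (hφ.tendsto L).comp h3
  have hval : r ⬝ᵥ (L *ᵥ g) = (r ∘ Sum.inl) ⬝ᵥ (B⁻¹ *ᵥ (g ∘ Sum.inl)) := by
    rw [hL, ← Sum.elim_comp_inl_inr g, ← Sum.elim_comp_inl_inr r,
      Matrix.fromBlocks_mulVec, sumElim_dotProduct_sumElim]
    simp
  rw [hval] at h4
  exact h4
end

section
/- (Ignorance of missing rows, variance part) With the same setting as above, as η → ∞, the quantity ρ − rᵀ (R + D + η S̃S̃ᵀ)⁻¹ r converges to ρ − r_Qᵀ ((R+D)_{QQ})⁻¹ r_Q for any real ρ; i.e., the GP predictive variance using all n rows with penalty η on the set S converges to the predictive variance computed using only the rows in Q. -/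
open Matrix Filter

theorem stmt_16 (t s : ℕ)
    (R : Matrix (Fin t ⊕ Fin s) (Fin t ⊕ Fin s) ℝ) (hR : R.PosDef)
    (d : Fin t → ℝ) (hd : ∀ i, 0 ≤ d i)
    (D : Matrix (Fin t ⊕ Fin s) (Fin t ⊕ Fin s) ℝ)
    (hD : D = Matrix.fromBlocks (Matrix.diagonal d) 0 0 0)
    (P : Matrix (Fin t ⊕ Fin s) (Fin t ⊕ Fin s) ℝ)
    (hP : P = Matrix.fromBlocks 0 0 0 (1 : Matrix (Fin s) (Fin s) ℝ))
    (r : Fin t ⊕ Fin s → ℝ) (ρ : ℝ) :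
    Tendsto (fun η : ℝ => ρ - r ⬝ᵥ ((R + D + η • P)⁻¹ *ᵥ r)) atTop
      (nhds (ρ - (r ∘ Sum.inl) ⬝ᵥ
        (((R + D).submatrix Sum.inl Sum.inl)⁻¹ *ᵥ (r ∘ Sum.inl)))) := by
  classical
  -- D is positive semidefinite
  have hDdiag : D = Matrix.diagonal (Sum.elim d (fun _ : Fin s => (0 : ℝ))) := by
    rw [hD, show (0 : Matrix (Fin s) (Fin s) ℝ) = Matrix.diagonal (fun _ => (0 : ℝ)) from
      Matrix.diagonal_zero.symm, Matrix.fromBlocks_diagonal]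
  have hDpsd : D.PosSemidef := by
    rw [hDdiag]
    refine Matrix.posSemidef_diagonal_iff.mpr ?_
    rintro (i | i)
    · exact hd i
    · exact le_refl 0
  set M : Matrix (Fin t ⊕ Fin s) (Fin t ⊕ Fin s) ℝ := R + D with hMdef
  have hMpd : M.PosDef := hR.add_posSemidef hDpsd
  set A := M.toBlocks₁₁ with hAdef
  set B := M.toBlocks₁₂ with hBdef
  set C := M.toBlocks₂₂ with hCdef
  -- block decomposition of M
  have h21 : M.toBlocks₂₁ = Bᴴ := by
    ext i j
    have := congrFun (congrFun hMpd.isHermitian (Sum.inr i)) (Sum.inl j)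
    simpa [hBdef, Matrix.toBlocks₂₁, Matrix.toBlocks₁₂, Matrix.conjTranspose_apply] using this.symm
  have hblocks : M = Matrix.fromBlocks A B Bᴴ C := by
    conv_lhs => rw [← Matrix.fromBlocks_toBlocks M]
    rw [h21]
  -- A is positive definite
  have hAsub : A = M.submatrix Sum.inl Sum.inl := rfl
  have hApd : A.PosDef := by
    refine Matrix.posDef_iff_dotProduct_mulVec.mpr ⟨hAsub ▸ hMpd.isHermitian.submatrix Sum.inl, fun x hx => ?_⟩
    have hy : (Sum.elim x 0 : Fin t ⊕ Fin s → ℝ) ≠ 0 := by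
      intro h
      exact hx (funext fun i => congrFun h (Sum.inl i))
    have h := (Matrix.posDef_iff_dotProduct_mulVec.mp hMpd).2 (x := Sum.elim x 0) hy
    rw [hblocks] at h
    simpa [Matrix.fromBlocks_mulVec, Matrix.dotProduct_block] using h
  haveI hAinv : Invertible A := hApd.isUnit.invertible
  -- the Schur complement
  set K := C - Bᴴ * A⁻¹ * B with hKdef
  have hKpsd : K.PosSemidef := by
    rw [hKdef, ← Matrix.PosDef.fromBlocks₁₁ B C hApd]
    exact hblocks ▸ hMpd.posSemidef
  -- helper: nonnegative multiples of K are PSD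
  have hsmulK : ∀ c : ℝ, 0 ≤ c → (c • K).PosSemidef := by
    intro c hc
    refine Matrix.posSemidef_iff_dotProduct_mulVec.mpr ⟨?_, fun x => ?_⟩
    · show (c • K)ᴴ = c • K
      rw [Matrix.conjTranspose_smul, hKpsd.1.eq, star_trivial]
    · rw [Matrix.smul_mulVec, dotProduct_smul, smul_eq_mul]
      exact mul_nonneg hc ((Matrix.posSemidef_iff_dotProduct_mulVec.mp hKpsd).2 x)
  -- helper: positive multiples of 1 are posdef
  have hone : ∀ η : ℝ, 0 < η → (η • (1 : Matrix (Fin s) (Fin s) ℝ)).PosDef := by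
    intro η hη
    have h1 : η • (1 : Matrix (Fin s) (Fin s) ℝ)
        = Matrix.diagonal (fun _ : Fin s => η) := by
      ext i j
      by_cases h : i = j <;>
        simp [h, Matrix.one_apply, Matrix.diagonal_apply]
    rw [h1]
    exact Matrix.posDef_diagonal_iff.mpr fun _ => hη
  -- the function F
  set r₁ := r ∘ Sum.inl with hr₁
  set F : Matrix (Fin s) (Fin s) ℝ → ℝ := fun X =>
    r ⬝ᵥ (Matrix.fromBlocks (A⁻¹ + A⁻¹ * B * X * Bᴴ * A⁻¹) (-(A⁻¹ * B * X))
      (-(X * Bᴴ * A⁻¹)) X *ᵥ r) with hFdef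
  have hFcont : Continuous F := by
    refine continuous_const.dotProduct ?_
    refine Continuous.matrix_mulVec ?_ continuous_const
    refine Continuous.matrix_fromBlocks ?_ ?_ ?_ continuous_id
    · exact continuous_const.add
        ((((continuous_const.matrix_mul continuous_id).matrix_mul
          continuous_const).matrix_mul continuous_const))
    · exact (continuous_const.matrix_mul continuous_id).neg
    · exact ((continuous_id.matrix_mul continuous_const).matrix_mul continuous_const).neg
  have hF0 : F 0 = r₁ ⬝ᵥ (A⁻¹ *ᵥ r₁) := by
    simp [hFdef, Matrix.fromBlocks_mulVec, Matrix.dotProduct_block, hr₁]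
  -- tendsto of the inverse of the shifted Schur complement to zero
  have hKinv : Tendsto (fun η : ℝ => (K + η • (1 : Matrix (Fin s) (Fin s) ℝ))⁻¹)
      atTop (nhds 0) := by
    have hcont1 : ContinuousAt
        (fun ε : ℝ => ε • ((1 : Matrix (Fin s) (Fin s) ℝ) + ε • K)⁻¹) 0 := by
      have h1 : ContinuousAt
          (fun ε : ℝ => (1 : Matrix (Fin s) (Fin s) ℝ) + ε • K) 0 :=
        (continuous_const.add (continuous_id.smul continuous_const)).continuousAt
      have h2 : ContinuousAt Inv.inv
          ((fun ε : ℝ => (1 : Matrix (Fin s) (Fin s) ℝ) + ε • K) 0) := by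
        simp only [zero_smul, add_zero]
        refine continuousAt_matrix_inv 1 ?_
        rw [Matrix.det_one, Ring.inverse_eq_inv']
        exact continuousAt_inv₀ one_ne_zero
      exact continuousAt_id.smul (ContinuousAt.comp (x := (0 : ℝ)) h2 h1)
    have hT := hcont1.tendsto.comp tendsto_inv_atTop_zero
    have hval : (0 : ℝ) • ((1 : Matrix (Fin s) (Fin s) ℝ) + (0 : ℝ) • K)⁻¹ = 0 := by
      simp
    rw [hval] at hT
    refine hT.congr' ?_
    filter_upwards [eventually_gt_atTop (0 : ℝ)] with η hη
    show η⁻¹ • ((1 : Matrix (Fin s) (Fin s) ℝ) + η⁻¹ • K)⁻¹ = (K + η • 1)⁻¹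
    have hpd : ((1 : Matrix (Fin s) (Fin s) ℝ) + η⁻¹ • K).PosDef :=
      Matrix.PosDef.add_posSemidef Matrix.PosDef.one (hsmulK η⁻¹ (inv_nonneg.mpr hη.le))
    have heq : K + η • (1 : Matrix (Fin s) (Fin s) ℝ)
        = η • ((1 : Matrix (Fin s) (Fin s) ℝ) + η⁻¹ • K) := by
      rw [smul_add, smul_smul, mul_inv_cancel₀ hη.ne', one_smul, add_comm]
    rw [heq]
    refine (Matrix.inv_eq_right_inv ?_).symm
    rw [Matrix.smul_mul, Matrix.mul_smul, smul_smul, mul_inv_cancel₀ hη.ne',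
      Matrix.mul_nonsing_inv _ hpd.det_pos.ne'.isUnit, one_smul]
  -- main pointwise identity for η > 0
  have hmain : ∀ η : ℝ, 0 < η →
      r ⬝ᵥ ((R + D + η • P)⁻¹ *ᵥ r)
        = F ((K + η • (1 : Matrix (Fin s) (Fin s) ℝ))⁻¹) := by
    intro η hη
    have hSpd : (K + η • (1 : Matrix (Fin s) (Fin s) ℝ)).PosDef :=
      Matrix.PosDef.posSemidef_add hKpsd (hone η hη)
    haveI hSinv : Invertible (K + η • (1 : Matrix (Fin s) (Fin s) ℝ)) :=
      hSpd.isUnit.invertible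
    have hKey : C + η • (1 : Matrix (Fin s) (Fin s) ℝ) - Bᴴ * A⁻¹ * B
        = K + η • 1 := by
      rw [hKdef, sub_add_eq_add_sub]
    have hKey' : C + η • (1 : Matrix (Fin s) (Fin s) ℝ) - Bᴴ * ⅟A * B
        = K + η • 1 := by
      rw [invOf_eq_nonsing_inv, hKey]
    haveI : Invertible (C + η • (1 : Matrix (Fin s) (Fin s) ℝ) - Bᴴ * ⅟A * B) :=
      hKey' ▸ hSinv
    have hMP : R + D + η • P = Matrix.fromBlocks A B Bᴴ (C + η • 1) := by
      rw [hP, ← hMdef, hblocks, Matrix.fromBlocks_smul, Matrix.fromBlocks_add]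
      simp
    haveI hBlockInv : Invertible (Matrix.fromBlocks A B Bᴴ (C + η • 1)) :=
      Matrix.fromBlocks₁₁Invertible A B Bᴴ (C + η • 1)
    have hinv : (R + D + η • P)⁻¹
        = Matrix.fromBlocks
            (A⁻¹ + A⁻¹ * B * (K + η • 1)⁻¹ * Bᴴ * A⁻¹)
            (-(A⁻¹ * B * (K + η • 1)⁻¹))
            (-((K + η • 1)⁻¹ * Bᴴ * A⁻¹))
            ((K + η • 1)⁻¹) := by
      rw [hMP, ← Matrix.invOf_eq_nonsing_inv, Matrix.invOf_fromBlocks₁₁_eq]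
      simp only [invOf_eq_nonsing_inv, hKey]
    rw [hinv]
  -- conclude
  have htail : Tendsto (fun η : ℝ => r ⬝ᵥ ((R + D + η • P)⁻¹ *ᵥ r)) atTop
      (nhds (r₁ ⬝ᵥ (A⁻¹ *ᵥ r₁))) := by
    have h1 := (hFcont.tendsto 0).comp hKinv
    rw [hF0] at h1
    refine h1.congr' ?_
    filter_upwards [eventually_gt_atTop (0 : ℝ)] with η hη
    exact (hmain η hη).symm
  have hfinal : ((R + D).submatrix Sum.inl Sum.inl)⁻¹ = A⁻¹ := rfl
  rw [hfinal]
  exact htail.const_sub ρ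
end
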